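/- arXiv:2511.09930 — 2 statements merged into one kernel-verified Lean document; each statement's English description precedes it below -/
import Mathlib

section
/- Let ε > 0 and g_ε : [0,∞) → [0,1] be a C¹ function with g_ε(t) = 1 for t ≤ e^{-2/ε}, g_ε(t) = 0 for t ≥ e^{-1/ε}, and −3ε/t ≤ g_ε'(t) ≤ 0 for all t > 0. Let Θ : (0,∞) → [0,∞) be nondecreasing with Θ(r) ≤ bπr² for all r ∈ (0,1] and some b > 0. Then 2∫_{e^{-2/ε}}^{e^{-1/ε}} 9ε² r^{-2} dΘ(r) ≤ 18bπ(ε² + 2ε), and in particular this quantity tends to 0 as ε → 0. -/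
open MeasureTheory Filter Topology Set Real ENNReal

lemma aux_key (b : ℝ) (hb : 0 < b) (Θ : StieltjesFunction ℝ)
    (hΘ0 : ∀ r > (0 : ℝ), 0 ≤ Θ r)
    (hΘb : ∀ r ∈ Set.Ioc (0 : ℝ) 1, Θ r ≤ b * Real.pi * r ^ 2)
    (ε : ℝ) (hε : 0 < ε) :
    ∫ r in Set.Ioc (Real.exp (-2 / ε)) (Real.exp (-1 / ε)),
        9 * ε ^ 2 / r ^ 2 ∂Θ.measure ≤ 9 * b * Real.pi * (ε ^ 2 + 2 * ε) := by
  set a := Real.exp (-2 / ε) with ha_def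
  set B := Real.exp (-1 / ε) with hB_def
  have ha : 0 < a := Real.exp_pos _
  have hB : 0 < B := Real.exp_pos _
  have hdiv : -2 / ε < -1 / ε := div_lt_div_of_pos_right (by norm_num) hε
  have haB : a < B := Real.exp_lt_exp.mpr hdiv
  have hB1 : B < 1 := by
    rw [hB_def, Real.exp_lt_one_iff]
    exact div_neg_of_neg_of_pos (by norm_num) hε
  set T1 : ℝ := 9 * ε ^ 2 / B ^ 2 with hT1_def
  set T2 : ℝ := 9 * ε ^ 2 / a ^ 2 with hT2_def
  have hT1 : 0 < T1 := by positivity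
  have hT12 : T1 < T2 := by
    apply div_lt_div_of_pos_left (by positivity) (by positivity)
    nlinarith
  set f : ℝ → ℝ := fun r => 9 * ε ^ 2 / r ^ 2 with hf_def
  have hf_nn : ∀ r, 0 ≤ f r := fun r => div_nonneg (by positivity) (sq_nonneg r)
  have hf_meas : Measurable f := by fun_prop
  set μ : Measure ℝ := Θ.measure.restrict (Set.Ioc a B) with hμ_def
  -- convert to lintegral
  rw [integral_eq_lintegral_of_nonneg_ae (Filter.Eventually.of_forall hf_nn)
    hf_meas.aestronglyMeasurable]
  -- layer cake
  rw [lintegral_eq_lintegral_meas_lt μ (Filter.Eventually.of_forall hf_nn) hf_meas.aemeasurable]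
  -- the majorant
  set H : ℝ → ℝ≥0∞ := fun t =>
    if t ≤ T1 then ENNReal.ofReal (b * Real.pi * B ^ 2)
    else if t ≤ T2 then ENNReal.ofReal (9 * b * Real.pi * ε ^ 2 / t)
    else 0 with hH_def
  have key : ∀ t ∈ Set.Ioi (0 : ℝ), μ {r | t < f r} ≤ H t := by
    intro t ht
    rw [Set.mem_Ioi] at ht
    rw [hμ_def, Measure.restrict_apply (show MeasurableSet {r | t < f r} from measurableSet_lt measurable_const hf_meas)]
    by_cases h1 : t ≤ T1
    · simp only [hH_def, if_pos h1]
      calc Θ.measure ({r | t < f r} ∩ Set.Ioc a B) ≤ Θ.measure (Set.Ioc a B) :=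
            measure_mono Set.inter_subset_right
        _ = ENNReal.ofReal (Θ B - Θ a) := Θ.measure_Ioc a B
        _ ≤ ENNReal.ofReal (b * Real.pi * B ^ 2) := by
            apply ENNReal.ofReal_le_ofReal
            have := hΘb B ⟨hB, hB1.le⟩
            have := hΘ0 a ha
            linarith
    · rw [not_le] at h1
      simp only [hH_def, if_neg (not_le.mpr h1)]
      by_cases h2 : t ≤ T2
      · rw [if_pos h2]
        set c : ℝ := 3 * ε / Real.sqrt t with hc_def
        have hst : 0 < Real.sqrt t := Real.sqrt_pos.mpr ht
        have hc : 0 < c := by positivity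
        have hc2 : c ^ 2 = 9 * ε ^ 2 / t := by
          rw [hc_def, div_pow, Real.sq_sqrt ht.le]; ring_nf
        have hcB : c < B := by
          have h9 : (9 : ℝ) * ε ^ 2 / T1 = B ^ 2 := by
            rw [hT1_def]; field_simp
          have : c ^ 2 < B ^ 2 := by
            rw [hc2, ← h9]
            exact div_lt_div_of_pos_left (by positivity) hT1 h1
          nlinarith
        have hsub : {r | t < f r} ∩ Set.Ioc a B ⊆ Set.Ioc a c := by
          rintro r ⟨hr1, hr2, hr3⟩
          have hr0 : 0 < r := lt_trans ha hr2
          have hrf : t < 9 * ε ^ 2 / r ^ 2 := hr1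
          have hr2c : r ^ 2 < c ^ 2 := by
            rw [hc2, lt_div_iff₀ ht]
            have := (lt_div_iff₀ (by positivity : (0:ℝ) < r ^ 2)).mp hrf
            linarith
          exact ⟨hr2, by nlinarith⟩
        calc Θ.measure ({r | t < f r} ∩ Set.Ioc a B) ≤ Θ.measure (Set.Ioc a c) :=
              measure_mono hsub
          _ = ENNReal.ofReal (Θ c - Θ a) := Θ.measure_Ioc a c
          _ ≤ ENNReal.ofReal (9 * b * Real.pi * ε ^ 2 / t) := by
              apply ENNReal.ofReal_le_ofReal
              have h1' := hΘb c ⟨hc, by linarith⟩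
              have h2' := hΘ0 a ha
              have : b * Real.pi * c ^ 2 = 9 * b * Real.pi * ε ^ 2 / t := by
                rw [hc2]; field_simp
              linarith
      · rw [not_le] at h2
        rw [if_neg (not_le.mpr h2)]
        have : {r | t < f r} ∩ Set.Ioc a B = ∅ := by
          rw [Set.eq_empty_iff_forall_notMem]
          rintro r ⟨hr1, hr2, hr3⟩
          have hr0 : 0 < r := lt_trans ha hr2
          have : f r < T2 := by
            rw [hT2_def, hf_def]
            exact div_lt_div_of_pos_left (by positivity) (by positivity)
              (by nlinarith)
          rw [Set.mem_setOf_eq] at hr1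
          linarith
        rw [this, measure_empty]
  have step1 : ∫⁻ t in Set.Ioi (0:ℝ), μ {r | t < f r} ≤ ∫⁻ t in Set.Ioi (0:ℝ), H t :=
    setLIntegral_mono' measurableSet_Ioi key
  have hHint : ∫⁻ t in Set.Ioi (0:ℝ), H t
      = ENNReal.ofReal (9 * b * Real.pi * ε ^ 2 + 18 * b * Real.pi * ε) := by
    have hsplit2 : Set.Ioc (0:ℝ) T1 ∪ Set.Ioc T1 T2 = Set.Ioc 0 T2 :=
      Set.Ioc_union_Ioc_eq_Ioc hT1.le hT12.le
    have hsplit1 : Set.Ioc (0:ℝ) T2 ∪ Set.Ioi T2 = Set.Ioi 0 :=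
      Set.Ioc_union_Ioi_eq_Ioi (lt_trans hT1 hT12).le
    rw [← hsplit1, lintegral_union measurableSet_Ioi
      (Set.Ioc_disjoint_Ioi le_rfl), ← hsplit2, lintegral_union measurableSet_Ioc
      (Set.Ioc_disjoint_Ioc_of_le le_rfl)]
    have P1 : ∫⁻ t in Set.Ioc (0:ℝ) T1, H t = ENNReal.ofReal (9 * b * Real.pi * ε ^ 2) := by
      rw [setLIntegral_congr_fun_ae measurableSet_Ioc
        (ae_of_all _ (fun t (ht : t ∈ Set.Ioc (0:ℝ) T1) =>
          (if_pos ht.2 : H t = ENNReal.ofReal (b * Real.pi * B ^ 2))))]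
      rw [setLIntegral_const, Real.volume_Ioc,
        ← ENNReal.ofReal_mul (by positivity)]
      congr 1
      rw [hT1_def]
      field_simp
      ring
    have P3 : ∫⁻ t in Set.Ioi T2, H t = 0 := by
      rw [setLIntegral_congr_fun_ae measurableSet_Ioi
        (ae_of_all _ (fun t (ht : t ∈ Set.Ioi T2) => by
          show H t = 0
          have ht' : T2 < t := ht
          rw [hH_def]
          simp only
          rw [if_neg (by linarith), if_neg (by linarith)]))]
      simp
    have P2 : ∫⁻ t in Set.Ioc T1 T2, H t = ENNReal.ofReal (18 * b * Real.pi * ε) := by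
      rw [setLIntegral_congr_fun_ae measurableSet_Ioc
        (ae_of_all _ (fun t (ht : t ∈ Set.Ioc T1 T2) => by
          show H t = ENNReal.ofReal (9 * b * Real.pi * ε ^ 2 / t)
          rw [hH_def]
          simp only
          rw [if_neg (not_le.mpr ht.1), if_pos ht.2]))]
      have hcont : ContinuousOn (fun t : ℝ => 9 * b * Real.pi * ε ^ 2 / t)
          (Set.uIcc T1 T2) := by
        apply ContinuousOn.div continuousOn_const continuousOn_id
        intro x hx
        rw [Set.uIcc_of_le hT12.le] at hx
        exact ne_of_gt (lt_of_lt_of_le hT1 hx.1)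
      have hii : IntervalIntegrable (fun t : ℝ => 9 * b * Real.pi * ε ^ 2 / t)
          volume T1 T2 := hcont.intervalIntegrable
      have hint : IntegrableOn (fun t : ℝ => 9 * b * Real.pi * ε ^ 2 / t)
          (Set.Ioc T1 T2) volume :=
        (intervalIntegrable_iff_integrableOn_Ioc_of_le hT12.le).mp hii
      have hnn : 0 ≤ᵐ[volume.restrict (Set.Ioc T1 T2)]
          fun t : ℝ => 9 * b * Real.pi * ε ^ 2 / t := by
        refine (ae_restrict_iff' measurableSet_Ioc).mpr (ae_of_all _ fun t ht => ?_)
        exact div_nonneg (by positivity) (le_of_lt (lt_trans hT1 ht.1))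
      rw [← ofReal_integral_eq_lintegral_ofReal hint hnn]
      congr 1
      rw [← intervalIntegral.integral_of_le hT12.le]
      have hrw : ∀ t : ℝ, 9 * b * Real.pi * ε ^ 2 / t
          = (9 * b * Real.pi * ε ^ 2) * (1 / t) := fun t => by ring
      simp_rw [hrw]
      rw [intervalIntegral.integral_const_mul, integral_one_div (by
        rw [Set.uIcc_of_le hT12.le]
        intro hmem
        exact absurd hmem.1 (not_le.mpr hT1))]
      have hlog : Real.log (T2 / T1) = 2 / ε := by
        have hratio : T2 / T1 = (B / a) ^ 2 := by
          rw [hT1_def, hT2_def]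
          field_simp
        rw [hratio, Real.log_pow, Real.log_div (ne_of_gt hB) (ne_of_gt ha),
          hB_def, ha_def, Real.log_exp, Real.log_exp]
        field_simp
        ring
      rw [hlog]
      field_simp
      ring
    rw [P1, P2, P3, add_zero, ← ENNReal.ofReal_add (by positivity) (by positivity)]
  calc (∫⁻ t in Set.Ioi (0:ℝ), μ {r | t < f r}).toReal
      ≤ (ENNReal.ofReal (9 * b * Real.pi * ε ^ 2 + 18 * b * Real.pi * ε)).toReal := by
        apply ENNReal.toReal_mono (by simp) (hHint ▸ step1)
    _ ≤ 9 * b * Real.pi * (ε ^ 2 + 2 * ε) := by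
        rw [ENNReal.toReal_ofReal (by positivity)]; ring_nf; linarith [Real.pi_pos]

theorem stmt_8 (b : ℝ) (hb : 0 < b) (Θ : StieltjesFunction ℝ)
    (hΘ0 : ∀ r > (0 : ℝ), 0 ≤ Θ r)
    (hΘb : ∀ r ∈ Set.Ioc (0 : ℝ) 1, Θ r ≤ b * Real.pi * r ^ 2) :
    (∀ ε > (0 : ℝ), ∀ g : ℝ → ℝ,
      (∀ t, g t ∈ Set.Icc (0 : ℝ) 1) →
      (∀ t ≤ Real.exp (-2 / ε), g t = 1) →
      (∀ t, Real.exp (-1 / ε) ≤ t → g t = 0) →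
      (∀ t > (0 : ℝ), HasDerivAt g (deriv g t) t ∧
        -3 * ε / t ≤ deriv g t ∧ deriv g t ≤ 0) →
      2 * ∫ r in Set.Ioc (Real.exp (-2 / ε)) (Real.exp (-1 / ε)),
          9 * ε ^ 2 / r ^ 2 ∂Θ.measure
        ≤ 18 * b * Real.pi * (ε ^ 2 + 2 * ε)) ∧
    Tendsto (fun ε : ℝ =>
        2 * ∫ r in Set.Ioc (Real.exp (-2 / ε)) (Real.exp (-1 / ε)),
          9 * ε ^ 2 / r ^ 2 ∂Θ.measure)
      (nhdsWithin 0 (Set.Ioi 0)) (𝓝 0) := by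
  constructor
  · intro ε hε g _ _ _ _
    have := aux_key b hb Θ hΘ0 hΘb ε hε
    linarith
  · apply squeeze_zero' (g := fun ε : ℝ => 18 * b * Real.pi * (ε ^ 2 + 2 * ε))
    · refine eventually_nhdsWithin_of_forall fun ε hε => ?_
      have : 0 ≤ ∫ r in Set.Ioc (Real.exp (-2 / ε)) (Real.exp (-1 / ε)),
          9 * ε ^ 2 / r ^ 2 ∂Θ.measure :=
        integral_nonneg fun r => div_nonneg (by positivity) (sq_nonneg r)
      linarith
    · refine eventually_nhdsWithin_of_forall fun ε hε => ?_
      have := aux_key b hb Θ hΘ0 hΘb ε hε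
      linarith
    · have hc : Continuous fun ε : ℝ => 18 * b * Real.pi * (ε ^ 2 + 2 * ε) := by
        continuity
      exact (hc.tendsto' 0 0 (by norm_num)).mono_left
        (nhdsWithin_le_nhds (s := Set.Ioi 0))
end

section
/- Let ν_f, ν_g be finite Borel measures on K and ν_{f,g} := (ν_{f+g} − ν_f − ν_g)/2 a signed measure satisfying the Cauchy–Schwarz-type bound |ν_{f,g}(A)| ≤ ν_f(A)^{1/2} ν_g(A)^{1/2} for all Borel A. Then for Borel functions φ ∈ L²(K, ν_f) and ψ ∈ L²(K, ν_g), φψ ∈ L¹(K, |ν_{f,g}|) and |∫_K φψ dν_{f,g}| ≤ (∫_K φ² dν_f)^{1/2} (∫_K ψ² dν_g)^{1/2}. -/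
open MeasureTheory

lemma quad_sq_le {a b c : ℝ} (h : ∀ t : ℝ, 0 ≤ c + 2 * t * b + t ^ 2 * a) :
    b ^ 2 ≤ a * c := by
  have hd := discrim_le_zero (a := a) (b := 2 * b) (c := c) (fun x => by
    have := h x; nlinarith)
  rw [discrim] at hd
  nlinarith

lemma integral_CS {K : Type*} [MeasurableSpace K] {μ : Measure K} {u v : K → ℝ}
    (hu : Integrable (fun x => u x ^ 2) μ) (hv : Integrable (fun x => v x ^ 2) μ)
    (huv : Integrable (fun x => u x * v x) μ) :
    (∫ x, u x * v x ∂μ) ≤ Real.sqrt (∫ x, u x ^ 2 ∂μ) * Real.sqrt (∫ x, v x ^ 2 ∂μ) := by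
  set C := ∫ x, u x ^ 2 ∂μ
  set A := ∫ x, v x ^ 2 ∂μ
  set B := ∫ x, u x * v x ∂μ
  have hC : 0 ≤ C := integral_nonneg fun x => sq_nonneg _
  have hA : 0 ≤ A := integral_nonneg fun x => sq_nonneg _
  have hkey : ∀ t : ℝ, 0 ≤ C + 2 * t * B + t ^ 2 * A := by
    intro t
    have h1 : Integrable (fun x => u x ^ 2 + 2 * t * (u x * v x) + t ^ 2 * v x ^ 2) μ :=
      (hu.add ((huv.const_mul _))).add (hv.const_mul _)
    have hf1 : Integrable (fun x => u x ^ 2 + 2 * t * (u x * v x)) μ :=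
      hu.add (huv.const_mul _)
    have hf2 : Integrable (fun x => t ^ 2 * v x ^ 2) μ := hv.const_mul _
    have hpt : ∀ x, (0:ℝ) ≤ u x ^ 2 + 2 * t * (u x * v x) + t ^ 2 * v x ^ 2 := by
      intro x; nlinarith [sq_nonneg (u x + t * v x)]
    have h2 : 0 ≤ ∫ x, (u x ^ 2 + 2 * t * (u x * v x) + t ^ 2 * v x ^ 2) ∂μ :=
      integral_nonneg hpt
    rwa [integral_add hf1 hf2,
      integral_add hu (huv.const_mul _), integral_const_mul, integral_const_mul] at h2
  have hB2 : B ^ 2 ≤ A * C := quad_sq_le hkey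
  calc B ≤ |B| := le_abs_self _
    _ = Real.sqrt (B ^ 2) := (Real.sqrt_sq_eq_abs B).symm
    _ ≤ Real.sqrt (C * A) := Real.sqrt_le_sqrt (by nlinarith)
    _ = Real.sqrt C * Real.sqrt A := Real.sqrt_mul hC A

lemma ae_abs_le_sqrt_mul_sqrt {K : Type*} [MeasurableSpace K] {μ : Measure K}
    [IsFiniteMeasure μ] {F G h : K → ℝ}
    (hF : Integrable F μ) (hG : Integrable G μ) (hh : Integrable h μ)
    (hFpos : ∀ x, 0 ≤ F x) (hGpos : ∀ x, 0 ≤ G x)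
    (hb : ∀ A : Set K, MeasurableSet A →
      |∫ x in A, h x ∂μ| ≤ Real.sqrt (∫ x in A, F x ∂μ) * Real.sqrt (∫ x in A, G x ∂μ)) :
    ∀ᵐ x ∂μ, |h x| ≤ Real.sqrt (F x) * Real.sqrt (G x) := by
  have hq : ∀ t : ℚ, ∀ᵐ x ∂μ, 0 ≤ F x + 2 * (t:ℝ) * h x + (t:ℝ) ^ 2 * G x := by
    intro t
    have hint : Integrable (fun x => F x + 2 * (t:ℝ) * h x + (t:ℝ) ^ 2 * G x) μ :=
      (hF.add (hh.const_mul _)).add (hG.const_mul _)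
    refine ae_nonneg_of_forall_setIntegral_nonneg hint fun A hA _ => ?_
    have h1 : Integrable (fun x => F x + 2 * (t:ℝ) * h x) (μ.restrict A) :=
      (hF.restrict.add (hh.restrict.const_mul _))
    rw [integral_add h1 (hG.restrict.const_mul _), integral_add hF.restrict
      (hh.restrict.const_mul _), integral_const_mul, integral_const_mul]
    set a := ∫ x in A, F x ∂μ
    set b := ∫ x in A, h x ∂μ
    set c := ∫ x in A, G x ∂μ
    have ha : 0 ≤ a := setIntegral_nonneg hA fun x _ => hFpos x
    have hc : 0 ≤ c := setIntegral_nonneg hA fun x _ => hGpos x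
    have hbb := hb A hA
    have h2 : |b| ≤ Real.sqrt a * Real.sqrt c := hbb
    have h3 := Real.sq_sqrt ha
    have h4 := Real.sq_sqrt hc
    have h5 : |2 * (t:ℝ) * b| ≤ 2 * |(t:ℝ)| * (Real.sqrt a * Real.sqrt c) := by
      rw [abs_mul, abs_mul, abs_two]
      exact mul_le_mul_of_nonneg_left h2 (by positivity)
    have h6 := neg_abs_le (2 * (t:ℝ) * b)
    nlinarith [sq_nonneg (Real.sqrt a - |(t:ℝ)| * Real.sqrt c), sq_abs (t:ℝ)]
  have hq' : ∀ᵐ x ∂μ, ∀ t : ℚ, 0 ≤ F x + 2 * (t:ℝ) * h x + (t:ℝ) ^ 2 * G x :=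
    (ae_all_iff).2 hq
  filter_upwards [hq'] with x hx
  have hreal : ∀ t : ℝ, 0 ≤ F x + 2 * t * h x + t ^ 2 * G x := by
    have hclosed : IsClosed {t : ℝ | 0 ≤ F x + 2 * t * h x + t ^ 2 * G x} :=
      isClosed_le continuous_const (by continuity)
    have hsub : Set.range ((↑) : ℚ → ℝ) ⊆ {t : ℝ | 0 ≤ F x + 2 * t * h x + t ^ 2 * G x} := by
      rintro _ ⟨q, rfl⟩; exact hx q
    have hdense := Rat.denseRange_cast (𝕜 := ℝ)
    intro t
    have : t ∈ closure (Set.range ((↑) : ℚ → ℝ)) := by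
      rw [hdense.closure_range]; trivial
    exact hclosed.closure_subset (closure_mono hsub (by simpa [hclosed.closure_eq] using this))
  have hsq : h x ^ 2 ≤ G x * F x := quad_sq_le hreal
  calc |h x| = Real.sqrt (h x ^ 2) := (Real.sqrt_sq_eq_abs _).symm
    _ ≤ Real.sqrt (F x * G x) := Real.sqrt_le_sqrt (by nlinarith)
    _ = Real.sqrt (F x) * Real.sqrt (G x) := Real.sqrt_mul (hFpos x) _

theorem stmt_15 {K : Type*} [MeasurableSpace K]
    (νf νg : Measure K) [IsFiniteMeasure νf] [IsFiniteMeasure νg]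
    (σ : SignedMeasure K)
    (hCS : ∀ A : Set K, MeasurableSet A →
      |σ A| ≤ Real.sqrt (νf A).toReal * Real.sqrt (νg A).toReal)
    (φ ψ : K → ℝ) (hφ : MemLp φ 2 νf) (hψ : MemLp ψ 2 νg) :
    Integrable (fun x => φ x * ψ x) σ.totalVariation ∧
    |(∫ x, φ x * ψ x ∂σ.toJordanDecomposition.posPart) -
        ∫ x, φ x * ψ x ∂σ.toJordanDecomposition.negPart|
      ≤ Real.sqrt (∫ x, (φ x) ^ 2 ∂νf) * Real.sqrt (∫ x, (ψ x) ^ 2 ∂νg) := by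
  obtain ⟨i, hi₁, hi₂, hi₃, hp, hn⟩ := σ.toJordanDecomposition_spec
  set p := σ.toJordanDecomposition.posPart with hpdef
  set n := σ.toJordanDecomposition.negPart with hndef
  set μ : Measure K := νf + νg with hμdef
  -- basic set-wise identities
  have hpA : ∀ A : Set K, MeasurableSet A → (p A).toReal = σ (i ∩ A) := by
    intro A hA
    rw [hp, SignedMeasure.toMeasureOfZeroLE_apply _ hi₂ hi₁ hA]
    simp
  have hnA : ∀ A : Set K, MeasurableSet A → (n A).toReal = -σ (iᶜ ∩ A) := by
    intro A hA
    rw [hn, SignedMeasure.toMeasureOfLEZero_apply _ hi₃ hi₁.compl hA]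
    simp
  have hpb : ∀ A : Set K, MeasurableSet A →
      (p A).toReal ≤ Real.sqrt (νf A).toReal * Real.sqrt (νg A).toReal := by
    intro A hA
    rw [hpA A hA]
    refine le_trans (le_abs_self _) ((hCS _ (hi₁.inter hA)).trans ?_)
    have h1 : (νf (i ∩ A)).toReal ≤ (νf A).toReal :=
      ENNReal.toReal_mono (measure_ne_top _ _) (measure_mono Set.inter_subset_right)
    have h2 : (νg (i ∩ A)).toReal ≤ (νg A).toReal :=
      ENNReal.toReal_mono (measure_ne_top _ _) (measure_mono Set.inter_subset_right)
    exact mul_le_mul (Real.sqrt_le_sqrt h1) (Real.sqrt_le_sqrt h2) (Real.sqrt_nonneg _)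
      (Real.sqrt_nonneg _)
  have hnb : ∀ A : Set K, MeasurableSet A →
      (n A).toReal ≤ Real.sqrt (νf A).toReal * Real.sqrt (νg A).toReal := by
    intro A hA
    rw [hnA A hA]
    refine le_trans (neg_le_abs _) ((hCS _ (hi₁.compl.inter hA)).trans ?_)
    have h1 : (νf (iᶜ ∩ A)).toReal ≤ (νf A).toReal :=
      ENNReal.toReal_mono (measure_ne_top _ _) (measure_mono Set.inter_subset_right)
    have h2 : (νg (iᶜ ∩ A)).toReal ≤ (νg A).toReal :=
      ENNReal.toReal_mono (measure_ne_top _ _) (measure_mono Set.inter_subset_right)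
    exact mul_le_mul (Real.sqrt_le_sqrt h1) (Real.sqrt_le_sqrt h2) (Real.sqrt_nonneg _)
      (Real.sqrt_nonneg _)
  have hσA : ∀ A : Set K, MeasurableSet A → σ A = (p A).toReal - (n A).toReal := by
    intro A hA
    conv_lhs => rw [← σ.toSignedMeasure_toJordanDecomposition]
    rw [JordanDecomposition.toSignedMeasure, Measure.toSignedMeasure_sub_apply hA]
    rfl
  -- domination by μ
  have hμA : ∀ A : Set K, (μ A).toReal = (νf A).toReal + (νg A).toReal := by
    intro A
    rw [hμdef, Measure.add_apply, ENNReal.toReal_add (measure_ne_top _ _) (measure_ne_top _ _)]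
  have hdom : ∀ (m : Measure K), IsFiniteMeasure m →
      (∀ A : Set K, MeasurableSet A →
        (m A).toReal ≤ Real.sqrt (νf A).toReal * Real.sqrt (νg A).toReal) → m ≤ μ := by
    intro m hm hb
    refine Measure.le_iff.2 fun A hA => ?_
    have h1 : (m A).toReal ≤ (μ A).toReal := by
      rw [hμA A]
      have h2 := hb A hA
      have h3 := Real.sq_sqrt (ENNReal.toReal_nonneg : (0:ℝ) ≤ (νf A).toReal)
      have h4 := Real.sq_sqrt (ENNReal.toReal_nonneg : (0:ℝ) ≤ (νg A).toReal)
      nlinarith [sq_nonneg (Real.sqrt (νf A).toReal - Real.sqrt (νg A).toReal)]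
    exact (ENNReal.toReal_le_toReal (measure_ne_top _ _) (measure_ne_top _ _)).1 h1
  have hple : p ≤ μ := hdom p inferInstance hpb
  have hnle : n ≤ μ := hdom n inferInstance hnb
  have hpac : p ≪ μ := hple.absolutelyContinuous
  have hnac : n ≪ μ := hnle.absolutelyContinuous
  have hfac : νf ≪ μ := (Measure.le_add_right le_rfl).absolutelyContinuous
  have hgac : νg ≪ μ := (Measure.le_add_left le_rfl).absolutelyContinuous
  -- densities
  set Ff : K → ℝ := fun x => (νf.rnDeriv μ x).toReal with hFf
  set Fg : K → ℝ := fun x => (νg.rnDeriv μ x).toReal with hFg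
  set Fp : K → ℝ := fun x => (p.rnDeriv μ x).toReal with hFp
  set Fn : K → ℝ := fun x => (n.rnDeriv μ x).toReal with hFn
  have hFfint : Integrable Ff μ := Measure.integrable_toReal_rnDeriv
  have hFgint : Integrable Fg μ := Measure.integrable_toReal_rnDeriv
  have hFpint : Integrable Fp μ := Measure.integrable_toReal_rnDeriv
  have hFnint : Integrable Fn μ := Measure.integrable_toReal_rnDeriv
  have hFfset : ∀ A : Set K, ∫ x in A, Ff x ∂μ = (νf A).toReal := fun A =>
    Measure.setIntegral_toReal_rnDeriv hfac A
  have hFgset : ∀ A : Set K, ∫ x in A, Fg x ∂μ = (νg A).toReal := fun A =>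
    Measure.setIntegral_toReal_rnDeriv hgac A
  have hFpset : ∀ A : Set K, ∫ x in A, Fp x ∂μ = (p A).toReal := fun A =>
    Measure.setIntegral_toReal_rnDeriv hpac A
  have hFnset : ∀ A : Set K, ∫ x in A, Fn x ∂μ = (n A).toReal := fun A =>
    Measure.setIntegral_toReal_rnDeriv hnac A
  have hFf0 : ∀ x, 0 ≤ Ff x := fun x => ENNReal.toReal_nonneg
  have hFg0 : ∀ x, 0 ≤ Fg x := fun x => ENNReal.toReal_nonneg
  have hFp0 : ∀ x, 0 ≤ Fp x := fun x => ENNReal.toReal_nonneg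
  have hFn0 : ∀ x, 0 ≤ Fn x := fun x => ENNReal.toReal_nonneg
  -- a.e. density bounds
  have hhp : ∀ᵐ x ∂μ, |Fp x| ≤ Real.sqrt (Ff x) * Real.sqrt (Fg x) := by
    refine ae_abs_le_sqrt_mul_sqrt hFfint hFgint hFpint hFf0 hFg0 fun A hA => ?_
    rw [hFpset A, hFfset A, hFgset A, abs_of_nonneg ENNReal.toReal_nonneg]
    exact hpb A hA
  have hhn : ∀ᵐ x ∂μ, |Fn x| ≤ Real.sqrt (Ff x) * Real.sqrt (Fg x) := by
    refine ae_abs_le_sqrt_mul_sqrt hFfint hFgint hFnint hFf0 hFg0 fun A hA => ?_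
    rw [hFnset A, hFfset A, hFgset A, abs_of_nonneg ENNReal.toReal_nonneg]
    exact hnb A hA
  have hhσ : ∀ᵐ x ∂μ, |Fp x - Fn x| ≤ Real.sqrt (Ff x) * Real.sqrt (Fg x) := by
    refine ae_abs_le_sqrt_mul_sqrt hFfint hFgint (hFpint.sub hFnint) hFf0 hFg0 fun A hA => ?_
    rw [integral_sub hFpint.restrict hFnint.restrict, hFpset A, hFnset A, hFfset A, hFgset A,
      ← hσA A hA]
    exact hCS A hA
  -- measurable representatives
  obtain ⟨φ', hφ'm, hφeq⟩ : ∃ φ' , StronglyMeasurable φ' ∧ φ =ᵐ[νf] φ' :=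
    ⟨hφ.1.mk φ, hφ.1.stronglyMeasurable_mk, hφ.1.ae_eq_mk⟩
  obtain ⟨ψ', hψ'm, hψeq⟩ : ∃ ψ' , StronglyMeasurable ψ' ∧ ψ =ᵐ[νg] ψ' :=
    ⟨hψ.1.mk ψ, hψ.1.stronglyMeasurable_mk, hψ.1.ae_eq_mk⟩
  set N := toMeasurable νf {x | φ x ≠ φ' x} with hN
  set M := toMeasurable νg {x | ψ x ≠ ψ' x} with hM
  have hNm : MeasurableSet N := measurableSet_toMeasurable _ _
  have hMm : MeasurableSet M := measurableSet_toMeasurable _ _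
  have hNf : νf N = 0 := by
    rw [hN, measure_toMeasurable]
    exact ae_iff.1 hφeq
  have hMg : νg M = 0 := by
    rw [hM, measure_toMeasurable]
    exact ae_iff.1 hψeq
  have hFfN : ∀ᵐ x ∂μ, x ∈ N → Ff x = 0 := by
    have h0 : ∫ x in N, Ff x ∂μ = 0 := by rw [hFfset N, hNf]; simp
    have h1 : Ff =ᵐ[μ.restrict N] 0 :=
      (integral_eq_zero_iff_of_nonneg hFf0 hFfint.restrict).1 h0
    exact (ae_restrict_iff' hNm).1 h1
  have hFgM : ∀ᵐ x ∂μ, x ∈ M → Fg x = 0 := by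
    have h0 : ∫ x in M, Fg x ∂μ = 0 := by rw [hFgset M, hMg]; simp
    have h1 : Fg =ᵐ[μ.restrict M] 0 :=
      (integral_eq_zero_iff_of_nonneg hFg0 hFgint.restrict).1 h0
    exact (ae_restrict_iff' hMm).1 h1
  have hvan : ∀ᵐ x ∂μ, x ∈ N ∪ M → Fp x = 0 ∧ Fn x = 0 := by
    filter_upwards [hhp, hhn, hFfN, hFgM] with x h1 h2 h3 h4 hx
    have hz : Real.sqrt (Ff x) * Real.sqrt (Fg x) = 0 := by
      rcases hx with hx | hx
      · rw [h3 hx, Real.sqrt_zero, zero_mul]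
      · rw [h4 hx, Real.sqrt_zero, mul_zero]
    constructor
    · have := h1.trans hz.le
      exact abs_eq_zero.1 (le_antisymm this (abs_nonneg _))
    · have := h2.trans hz.le
      exact abs_eq_zero.1 (le_antisymm this (abs_nonneg _))
  have hout : ∀ x, x ∉ N ∪ M → φ x * ψ x = φ' x * ψ' x := by
    intro x hx
    rw [Set.mem_union] at hx
    push_neg at hx
    have h1 : φ x = φ' x := by
      by_contra hne
      exact hx.1 (subset_toMeasurable _ _ hne)
    have h2 : ψ x = ψ' x := by
      by_contra hne
      exact hx.2 (subset_toMeasurable _ _ hne)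
    rw [h1, h2]
  have hpprod : (fun x => Fp x * (φ x * ψ x)) =ᵐ[μ] fun x => Fp x * (φ' x * ψ' x) := by
    filter_upwards [hvan] with x hv
    by_cases hx : x ∈ N ∪ M
    · rw [(hv hx).1, zero_mul, zero_mul]
    · rw [hout x hx]
  have hnprod : (fun x => Fn x * (φ x * ψ x)) =ᵐ[μ] fun x => Fn x * (φ' x * ψ' x) := by
    filter_upwards [hvan] with x hv
    by_cases hx : x ∈ N ∪ M
    · rw [(hv hx).2, zero_mul, zero_mul]
    · rw [hout x hx]
  -- integrability of dominating products
  have hφ'2 : Integrable (fun x => φ' x ^ 2) νf := (hφ.ae_eq hφeq).integrable_sq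
  have hψ'2 : Integrable (fun x => ψ' x ^ 2) νg := (hψ.ae_eq hψeq).integrable_sq
  have hintf2 : Integrable (fun x => Ff x * φ' x ^ 2) μ := by
    have := (integrable_rnDeriv_smul_iff (f := fun x => φ' x ^ 2) hfac).2 hφ'2
    simpa [smul_eq_mul] using this
  have hintg2 : Integrable (fun x => Fg x * ψ' x ^ 2) μ := by
    have := (integrable_rnDeriv_smul_iff (f := fun x => ψ' x ^ 2) hgac).2 hψ'2
    simpa [smul_eq_mul] using this
  have mFf : Measurable Ff := (Measure.measurable_rnDeriv _ _).ennreal_toReal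
  have mFg : Measurable Fg := (Measure.measurable_rnDeriv _ _).ennreal_toReal
  have mFp : Measurable Fp := (Measure.measurable_rnDeriv _ _).ennreal_toReal
  have mFn : Measurable Fn := (Measure.measurable_rnDeriv _ _).ennreal_toReal
  set u : K → ℝ := fun x => Real.sqrt (Ff x) * |φ' x| with hu
  set v : K → ℝ := fun x => Real.sqrt (Fg x) * |ψ' x| with hv
  have mu : Measurable u := (mFf.sqrt).mul hφ'm.measurable.abs
  have mv : Measurable v := (mFg.sqrt).mul hψ'm.measurable.abs
  have hu0 : ∀ x, 0 ≤ u x := fun x => mul_nonneg (Real.sqrt_nonneg _) (abs_nonneg _)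
  have hv0 : ∀ x, 0 ≤ v x := fun x => mul_nonneg (Real.sqrt_nonneg _) (abs_nonneg _)
  have hu2 : Integrable (fun x => u x ^ 2) μ := by
    refine hintf2.congr (Filter.Eventually.of_forall fun x => ?_)
    show Ff x * φ' x ^ 2 = (Real.sqrt (Ff x) * |φ' x|) ^ 2
    rw [mul_pow, Real.sq_sqrt (hFf0 x), sq_abs]
  have hv2 : Integrable (fun x => v x ^ 2) μ := by
    refine hintg2.congr (Filter.Eventually.of_forall fun x => ?_)
    show Fg x * ψ' x ^ 2 = (Real.sqrt (Fg x) * |ψ' x|) ^ 2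
    rw [mul_pow, Real.sq_sqrt (hFg0 x), sq_abs]
  have hintuv : Integrable (fun x => u x * v x) μ := by
    refine Integrable.mono' (hu2.add hv2) (mu.mul mv).aestronglyMeasurable
      (Filter.Eventually.of_forall fun x => ?_)
    show |u x * v x| ≤ u x ^ 2 + v x ^ 2
    rw [abs_of_nonneg (mul_nonneg (hu0 x) (hv0 x))]
    nlinarith [sq_nonneg (u x - v x), mul_nonneg (hu0 x) (hv0 x)]
  have habs' : ∀ x, |φ' x * ψ' x| = |φ' x| * |ψ' x| := fun x => abs_mul _ _
  have hintpΦ : Integrable (fun x => Fp x * (φ' x * ψ' x)) μ := by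
    refine Integrable.mono' hintuv
      (((mFp.mul (hφ'm.measurable.mul hψ'm.measurable))).aestronglyMeasurable) ?_
    filter_upwards [hhp] with x hx
    rw [Real.norm_eq_abs, abs_mul, habs' x]
    calc |Fp x| * (|φ' x| * |ψ' x|)
        ≤ (Real.sqrt (Ff x) * Real.sqrt (Fg x)) * (|φ' x| * |ψ' x|) := by
          exact mul_le_mul_of_nonneg_right hx (by positivity)
      _ = u x * v x := by rw [hu, hv]; ring
  have hintnΦ : Integrable (fun x => Fn x * (φ' x * ψ' x)) μ := by
    refine Integrable.mono' hintuv
      (((mFn.mul (hφ'm.measurable.mul hψ'm.measurable))).aestronglyMeasurable) ?_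
    filter_upwards [hhn] with x hx
    rw [Real.norm_eq_abs, abs_mul, habs' x]
    calc |Fn x| * (|φ' x| * |ψ' x|)
        ≤ (Real.sqrt (Ff x) * Real.sqrt (Fg x)) * (|φ' x| * |ψ' x|) := by
          exact mul_le_mul_of_nonneg_right hx (by positivity)
      _ = u x * v x := by rw [hu, hv]; ring
  -- integrability part of the goal
  have hIp : Integrable (fun x => φ x * ψ x) p := by
    refine (integrable_rnDeriv_smul_iff hpac).1 ?_
    simp only [smul_eq_mul]
    exact hintpΦ.congr hpprod.symm
  have hIn : Integrable (fun x => φ x * ψ x) n := by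
    refine (integrable_rnDeriv_smul_iff hnac).1 ?_
    simp only [smul_eq_mul]
    exact hintnΦ.congr hnprod.symm
  have htv : σ.totalVariation = p + n := rfl
  refine ⟨by rw [htv]; exact hIp.add_measure hIn, ?_⟩
  -- main estimate
  have e1 : ∫ x, φ x * ψ x ∂p = ∫ x, Fp x * (φ' x * ψ' x) ∂μ := by
    rw [← integral_rnDeriv_smul hpac]
    simp only [smul_eq_mul]
    exact integral_congr_ae hpprod
  have e2 : ∫ x, φ x * ψ x ∂n = ∫ x, Fn x * (φ' x * ψ' x) ∂μ := by
    rw [← integral_rnDeriv_smul hnac]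
    simp only [smul_eq_mul]
    exact integral_congr_ae hnprod
  have e3 : (∫ x, φ x * ψ x ∂p) - ∫ x, φ x * ψ x ∂n
      = ∫ x, (Fp x - Fn x) * (φ' x * ψ' x) ∂μ := by
    rw [e1, e2, ← integral_sub hintpΦ hintnΦ]
    exact integral_congr_ae (Filter.Eventually.of_forall fun x => by
      simp only [Pi.sub_apply]; ring)
  have hintd : Integrable (fun x => (Fp x - Fn x) * (φ' x * ψ' x)) μ :=
    (hintpΦ.sub hintnΦ).congr (Filter.Eventually.of_forall fun x => by
      simp only [Pi.sub_apply]; ring)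
  have e4 : |∫ x, (Fp x - Fn x) * (φ' x * ψ' x) ∂μ| ≤ ∫ x, u x * v x ∂μ := by
    have e4a : |∫ x, (Fp x - Fn x) * (φ' x * ψ' x) ∂μ|
        ≤ ∫ x, |(Fp x - Fn x) * (φ' x * ψ' x)| ∂μ := by
      simpa only [Real.norm_eq_abs] using
        norm_integral_le_integral_norm (μ := μ) (fun x => (Fp x - Fn x) * (φ' x * ψ' x))
    refine e4a.trans ?_
    calc (∫ x, |(Fp x - Fn x) * (φ' x * ψ' x)| ∂μ)
      _ ≤ ∫ x, u x * v x ∂μ := by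
          refine integral_mono_ae hintd.abs hintuv ?_
          filter_upwards [hhσ] with x hx
          rw [abs_mul, habs' x]
          calc |Fp x - Fn x| * (|φ' x| * |ψ' x|)
              ≤ (Real.sqrt (Ff x) * Real.sqrt (Fg x)) * (|φ' x| * |ψ' x|) :=
                mul_le_mul_of_nonneg_right hx (by positivity)
            _ = u x * v x := by rw [hu, hv]; ring
  have e5 : ∫ x, u x * v x ∂μ ≤
      Real.sqrt (∫ x, u x ^ 2 ∂μ) * Real.sqrt (∫ x, v x ^ 2 ∂μ) :=
    integral_CS hu2 hv2 hintuv
  have e6 : ∫ x, u x ^ 2 ∂μ = ∫ x, (φ x) ^ 2 ∂νf := by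
    have h1 : ∫ x, u x ^ 2 ∂μ = ∫ x, Ff x * φ' x ^ 2 ∂μ := by
      refine integral_congr_ae (Filter.Eventually.of_forall fun x => ?_)
      show (Real.sqrt (Ff x) * |φ' x|) ^ 2 = Ff x * φ' x ^ 2
      rw [mul_pow, Real.sq_sqrt (hFf0 x), sq_abs]
    have h2 : ∫ x, Ff x * φ' x ^ 2 ∂μ = ∫ x, φ' x ^ 2 ∂νf := by
      rw [← integral_rnDeriv_smul (f := fun x => φ' x ^ 2) hfac]
      simp only [smul_eq_mul]
      rfl
    have h3 : ∫ x, φ' x ^ 2 ∂νf = ∫ x, (φ x) ^ 2 ∂νf := by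
      refine integral_congr_ae ?_
      filter_upwards [hφeq] with x hx
      rw [hx]
    rw [h1, h2, h3]
  have e7 : ∫ x, v x ^ 2 ∂μ = ∫ x, (ψ x) ^ 2 ∂νg := by
    have h1 : ∫ x, v x ^ 2 ∂μ = ∫ x, Fg x * ψ' x ^ 2 ∂μ := by
      refine integral_congr_ae (Filter.Eventually.of_forall fun x => ?_)
      show (Real.sqrt (Fg x) * |ψ' x|) ^ 2 = Fg x * ψ' x ^ 2
      rw [mul_pow, Real.sq_sqrt (hFg0 x), sq_abs]
    have h2 : ∫ x, Fg x * ψ' x ^ 2 ∂μ = ∫ x, ψ' x ^ 2 ∂νg := by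
      rw [← integral_rnDeriv_smul (f := fun x => ψ' x ^ 2) hgac]
      simp only [smul_eq_mul]
      rfl
    have h3 : ∫ x, ψ' x ^ 2 ∂νg = ∫ x, (ψ x) ^ 2 ∂νg := by
      refine integral_congr_ae ?_
      filter_upwards [hψeq] with x hx
      rw [hx]
    rw [h1, h2, h3]
  calc |(∫ x, φ x * ψ x ∂p) - ∫ x, φ x * ψ x ∂n|
      = |∫ x, (Fp x - Fn x) * (φ' x * ψ' x) ∂μ| := by rw [e3]
    _ ≤ ∫ x, u x * v x ∂μ := e4
    _ ≤ Real.sqrt (∫ x, u x ^ 2 ∂μ) * Real.sqrt (∫ x, v x ^ 2 ∂μ) := e5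
    _ = Real.sqrt (∫ x, (φ x) ^ 2 ∂νf) * Real.sqrt (∫ x, (ψ x) ^ 2 ∂νg) := by rw [e6, e7]
end
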